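/- For all d ≥ 3, m(Q_d;3) ≤ ⌈d(d+3)/6⌉ + 1. -/

import Mathlib

open Finset

/-- One step of the r-neighbour bootstrap process on the d-dimensional hypercube
(vertices: `Fin d → Bool`, adjacency: Hamming distance 1). -/
def bootStep (d r : ℕ) (A : Finset (Fin d → Bool)) : Finset (Fin d → Bool) :=
  A ∪ Finset.univ.filter (fun v =>
    r ≤ ((Finset.univ.filter (fun w => hammingDist v w = 1)) ∩ A).card)

/-- `A` percolates under the r-neighbour bootstrap process on `Q_d`. -/
def Percolates (d r : ℕ) (A : Finset (Fin d → Bool)) : Prop :=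
  ∃ t : ℕ, (bootStep d r)^[t] A = Finset.univ

/-- `m(Q_d; r)`: minimum cardinality of a percolating set. -/
noncomputable def mQ (d r : ℕ) : ℕ :=
  sInf {n : ℕ | ∃ A : Finset (Fin d → Bool), A.card = n ∧ Percolates d r A}

namespace BootUp

def Infected (d r : ℕ) (A : Finset (Fin d → Bool)) (v : Fin d → Bool) : Prop :=
  ∃ t, v ∈ (bootStep d r)^[t] A

lemma subset_bootStep (d r : ℕ) (A : Finset (Fin d → Bool)) : A ⊆ bootStep d r A :=
  Finset.subset_union_left

lemma bootStep_mono {d r : ℕ} {A B : Finset (Fin d → Bool)} (h : A ⊆ B) :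
    bootStep d r A ⊆ bootStep d r B := by
  apply Finset.union_subset_union h
  intro v hv
  rw [Finset.mem_filter] at hv ⊢
  exact ⟨hv.1, hv.2.trans (Finset.card_le_card (Finset.inter_subset_inter (le_refl _) h))⟩

lemma iterate_mono_t {d r : ℕ} (A : Finset (Fin d → Bool)) {s t : ℕ} (h : s ≤ t) :
    (bootStep d r)^[s] A ⊆ (bootStep d r)^[t] A := by
  induction t with
  | zero => simp_all
  | succ n ih =>
      rcases Nat.lt_or_ge s (n+1) with h'|h'
      · refine (ih (by omega)).trans ?_
        rw [Function.iterate_succ_apply']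
        exact subset_bootStep _ _ _
      · have : s = n+1 := by omega
        subst this; rfl

lemma infected_seed {d r : ℕ} {A : Finset (Fin d → Bool)} {v} (h : v ∈ A) :
    Infected d r A v := ⟨0, h⟩

lemma iterate_subset_of_subset {d r : ℕ} {A B : Finset (Fin d → Bool)} (h : A ⊆ B) (t : ℕ) :
    (bootStep d r)^[t] A ⊆ (bootStep d r)^[t] B := by
  induction t with
  | zero => exact h
  | succ n ih =>
      rw [Function.iterate_succ_apply', Function.iterate_succ_apply']
      exact bootStep_mono ih

lemma infected_mono {d r : ℕ} {A B : Finset (Fin d → Bool)} (h : A ⊆ B) {v}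
    (hv : Infected d r A v) : Infected d r B v := by
  obtain ⟨t, ht⟩ := hv
  exact ⟨t, iterate_subset_of_subset h t ht⟩

lemma infected_of_three {d : ℕ} {r : ℕ} {A : Finset (Fin d → Bool)} {v w₁ w₂ w₃ : Fin d → Bool}
    (hr : r ≤ 3)
    (h₁ : hammingDist v w₁ = 1) (h₂ : hammingDist v w₂ = 1) (h₃ : hammingDist v w₃ = 1)
    (h₁₂ : w₁ ≠ w₂) (h₁₃ : w₁ ≠ w₃) (h₂₃ : w₂ ≠ w₃)
    (i₁ : Infected d r A w₁) (i₂ : Infected d r A w₂) (i₃ : Infected d r A w₃) :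
    Infected d r A v := by
  obtain ⟨t₁, m₁⟩ := i₁
  obtain ⟨t₂, m₂⟩ := i₂
  obtain ⟨t₃, m₃⟩ := i₃
  have m₁' := iterate_mono_t A (show t₁ ≤ t₁ + t₂ + t₃ by omega) m₁
  have m₂' := iterate_mono_t A (show t₂ ≤ t₁ + t₂ + t₃ by omega) m₂
  have m₃' := iterate_mono_t A (show t₃ ≤ t₁ + t₂ + t₃ by omega) m₃
  set T := t₁ + t₂ + t₃ with hT
  refine ⟨T + 1, ?_⟩
  rw [Function.iterate_succ_apply']
  refine Finset.mem_union_right _ (Finset.mem_filter.mpr ⟨Finset.mem_univ _, ?_⟩)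
  refine hr.trans ?_
  have hsub : ({w₁, w₂, w₃} : Finset (Fin d → Bool)) ⊆
      (Finset.univ.filter (fun w => hammingDist v w = 1)) ∩ ((bootStep d r)^[T] A) := by
    intro w hw
    simp only [Finset.mem_insert, Finset.mem_singleton] at hw
    rcases hw with rfl|rfl|rfl <;>
      exact Finset.mem_inter.mpr ⟨Finset.mem_filter.mpr ⟨Finset.mem_univ _, by assumption⟩,
        by assumption⟩
  have hcard : ({w₁, w₂, w₃} : Finset (Fin d → Bool)).card = 3 := by
    rw [Finset.card_insert_of_notMem (by simp [h₁₂, h₁₃]),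
        Finset.card_insert_of_notMem (by simp [h₂₃]), Finset.card_singleton]
  calc 3 = _ := hcard.symm
    _ ≤ _ := Finset.card_le_card hsub

lemma percolates_of_forall {d r : ℕ} {A : Finset (Fin d → Bool)}
    (h : ∀ v, Infected d r A v) : Percolates d r A := by
  choose f hf using h
  refine ⟨Finset.univ.sup f, ?_⟩
  apply Finset.eq_univ_of_forall
  intro v
  exact iterate_mono_t A (Finset.le_sup (Finset.mem_univ v)) (hf v)

end BootUp
namespace BootUp

def J {d : ℕ} (x : Fin d → Bool) (a b c : Bool) : Fin (d+3) → Bool :=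
  Fin.append x ![a, b, c]

def flip {d : ℕ} (j : Fin d) (x : Fin d → Bool) : Fin d → Bool :=
  Function.update x j (!(x j))

def zeroV (d : ℕ) : Fin d → Bool := fun _ => false

lemma flip_apply {d : ℕ} (j : Fin d) (x : Fin d → Bool) (i : Fin d) :
    flip j x i = if i = j then !(x j) else x i := by
  simp [flip, Function.update_apply]

lemma flip_self {d : ℕ} (j : Fin d) (x : Fin d → Bool) : flip j x j = !(x j) := by
  simp [flip_apply]

lemma flip_other {d : ℕ} {j i : Fin d} (h : i ≠ j) (x : Fin d → Bool) : flip j x i = x i := by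
  simp [flip_apply, h]

lemma flip_flip {d : ℕ} (j : Fin d) (x : Fin d → Bool) : flip j (flip j x) = x := by
  funext i
  rcases eq_or_ne i j with rfl|h
  · simp [flip_apply]
  · simp [flip_apply, h]

lemma flip_ne {d : ℕ} (j : Fin d) (x : Fin d → Bool) : flip j x ≠ x := by
  intro h
  have := congrFun h j
  simp [flip_self] at this

lemma hammingDist_flip {d : ℕ} (j : Fin d) (x : Fin d → Bool) :
    hammingDist x (flip j x) = 1 := by
  have : (Finset.univ.filter fun i => x i ≠ flip j x i) = {j} := by
    ext i
    rcases eq_or_ne i j with rfl|h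
    · simp [flip_self]
    · simp [flip_other h, h]
  simp only [hammingDist]
  rw [this, Finset.card_singleton]

lemma hammingDist_flip' {d : ℕ} (j : Fin d) (x : Fin d → Bool) :
    hammingDist (flip j x) x = 1 := by
  rw [hammingDist_comm]; exact hammingDist_flip j x

lemma hamming_J {d : ℕ} (x y : Fin d → Bool) (a b c a' b' c' : Bool) :
    hammingDist (J x a b c) (J y a' b' c') =
      hammingDist x y +
        ((if a = a' then 0 else 1) + (if b = b' then 0 else 1) + (if c = c' then 0 else 1)) := by
  simp only [hammingDist, Finset.card_filter]
  rw [Fin.sum_univ_add]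
  congr 1
  · apply Finset.sum_congr rfl
    intro i _
    simp [J, Fin.append_left]
  · rw [Fin.sum_univ_three]
    simp only [J, Fin.append_right]
    simp [Matrix.cons_val_zero, Matrix.cons_val_one, Matrix.head_cons]
    cases a <;> cases a' <;> cases b <;> cases b' <;> cases c <;> cases c' <;> rfl

lemma J_inner {d : ℕ} (x : Fin d → Bool) (a b c : Bool) (i : Fin d) :
    J x a b c (Fin.castAdd 3 i) = x i := Fin.append_left x _ i

lemma J_slice {d : ℕ} (x : Fin d → Bool) (a b c : Bool) (i : Fin 3) :
    J x a b c (Fin.natAdd d i) = ![a,b,c] i := Fin.append_right x _ i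

lemma J_inj {d : ℕ} {x y : Fin d → Bool} {a b c a' b' c' : Bool}
    (h : J x a b c = J y a' b' c') : x = y ∧ a = a' ∧ b = b' ∧ c = c' := by
  refine ⟨funext fun i => ?_, ?_, ?_, ?_⟩
  · have := congrFun h (Fin.castAdd 3 i); simpa [J_inner] using this
  · have := congrFun h (Fin.natAdd d 0); simpa [J_slice] using this
  · have := congrFun h (Fin.natAdd d 1); simpa [J_slice] using this
  · have := congrFun h (Fin.natAdd d 2); simpa [J_slice] using this

lemma J_surj {d : ℕ} (v : Fin (d+3) → Bool) :
    ∃ x a b c, v = J x a b c := by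
  refine ⟨fun i => v (Fin.castAdd 3 i), v (Fin.natAdd d 0), v (Fin.natAdd d 1),
    v (Fin.natAdd d 2), funext fun i => ?_⟩
  refine Fin.addCases (fun i => ?_) (fun i => ?_) i
  · rw [J_inner]
  · rw [J_slice]
    fin_cases i <;> rfl

end BootUp

namespace BootUp

section Helpers

variable {d : ℕ} {A : Finset (Fin (d+3) → Bool)}

lemma adjS {x : Fin d → Bool} {a b c a' b' c' : Bool}
    (h : ((if a = a' then 0 else 1) + (if b = b' then 0 else 1) + (if c = c' then 0 else 1)) = 1) :
    hammingDist (J x a b c) (J x a' b' c') = 1 := by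
  rw [hamming_J, hammingDist_self, zero_add, h]

lemma adjI {x y : Fin d → Bool} {a b c : Bool} (h : hammingDist x y = 1) :
    hammingDist (J x a b c) (J y a b c) = 1 := by
  rw [hamming_J, h]; simp

lemma neSlice {x y : Fin d → Bool} {a b c a' b' c' : Bool} (h : ¬(a = a' ∧ b = b' ∧ c = c')) :
    J x a b c ≠ J y a' b' c' := fun he =>
  h ⟨(J_inj he).2.1, (J_inj he).2.2.1, (J_inj he).2.2.2⟩

lemma neInner {x y : Fin d → Bool} {a b c a' b' c' : Bool} (h : x ≠ y) :
    J x a b c ≠ J y a' b' c' := fun he => h (J_inj he).1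

lemma flip_ne' {j : Fin d} {x : Fin d → Bool} : x ≠ flip j x := (flip_ne j x).symm

lemma flip_ne_flip {i j : Fin d} (h : i ≠ j) (x : Fin d → Bool) : flip i x ≠ flip j x := by
  intro he
  have := congrFun he i
  rw [flip_self, flip_other h] at this
  simp at this

/-- transfer of percolation from the inner cube to the 000-slice -/
lemma transfer {Ainner : Finset (Fin d → Bool)}
    (hsub : Ainner.image (fun x => J x false false false) ⊆ A)
    (hperc : Percolates d 3 Ainner) :
    ∀ x, Infected (d+3) 3 A (J x false false false) := by
  obtain ⟨T, hT⟩ := hperc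
  have key : ∀ t (x : Fin d → Bool), x ∈ (bootStep d 3)^[t] Ainner →
      Infected (d+3) 3 A (J x false false false) := by
    intro t
    induction t with
    | zero =>
        intro x hx
        exact infected_seed (hsub (Finset.mem_image.mpr ⟨x, hx, rfl⟩))
    | succ n ih =>
        intro x hx
        rw [Function.iterate_succ_apply'] at hx
        rcases Finset.mem_union.mp hx with h'|h'
        · exact ih x h'
        · have h3 := (Finset.mem_filter.mp h').2
          obtain ⟨t₃, ht₃sub, ht₃card⟩ := Finset.exists_subset_card_eq h3
          obtain ⟨x₁, x₂, x₃, h₁₂, h₁₃, h₂₃, rfl⟩ := Finset.card_eq_three.mp ht₃card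
          have m₁ := ht₃sub (show x₁ ∈ ({x₁, x₂, x₃} : Finset (Fin d → Bool)) by simp)
          have m₂ := ht₃sub (show x₂ ∈ ({x₁, x₂, x₃} : Finset (Fin d → Bool)) by simp)
          have m₃ := ht₃sub (show x₃ ∈ ({x₁, x₂, x₃} : Finset (Fin d → Bool)) by simp)
          rw [Finset.mem_inter, Finset.mem_filter] at m₁ m₂ m₃
          exact infected_of_three le_rfl (adjI m₁.1.2) (adjI m₂.1.2) (adjI m₃.1.2)
            (neInner h₁₂) (neInner h₁₃) (neInner h₂₃)
            (ih _ m₁.2) (ih _ m₂.2) (ih _ m₃.2)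
  intro x
  exact key T x (by rw [hT]; exact Finset.mem_univ x)

/-- a column with two full neighbouring columns becomes full -/
lemma colSpread (base : ∀ y, Infected (d+3) 3 A (J y false false false))
    {x x₁ x₂ : Fin d → Bool} (h₁ : hammingDist x x₁ = 1) (h₂ : hammingDist x x₂ = 1)
    (h₁₂ : x₁ ≠ x₂)
    (f₁ : ∀ a b c, Infected (d+3) 3 A (J x₁ a b c))
    (f₂ : ∀ a b c, Infected (d+3) 3 A (J x₂ a b c)) :
    ∀ a b c, Infected (d+3) 3 A (J x a b c) := by
  have i001 : Infected (d+3) 3 A (J x false false true) :=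
    infected_of_three le_rfl (adjS (by decide)) (adjI h₁) (adjI h₂)
      (neSlice (by decide)) (neSlice (by decide)) (neInner h₁₂)
      (base x) (f₁ _ _ _) (f₂ _ _ _)
  have i010 : Infected (d+3) 3 A (J x false true false) :=
    infected_of_three le_rfl (adjS (by decide)) (adjI h₁) (adjI h₂)
      (neSlice (by decide)) (neSlice (by decide)) (neInner h₁₂)
      (base x) (f₁ _ _ _) (f₂ _ _ _)
  have i100 : Infected (d+3) 3 A (J x true false false) :=
    infected_of_three le_rfl (adjS (by decide)) (adjI h₁) (adjI h₂)
      (neSlice (by decide)) (neSlice (by decide)) (neInner h₁₂)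
      (base x) (f₁ _ _ _) (f₂ _ _ _)
  have i011 : Infected (d+3) 3 A (J x false true true) :=
    infected_of_three le_rfl (adjS (by decide)) (adjS (by decide)) (adjI h₁)
      (neSlice (by decide)) (neSlice (by decide)) (neSlice (by decide))
      i001 i010 (f₁ _ _ _)
  have i101 : Infected (d+3) 3 A (J x true false true) :=
    infected_of_three le_rfl (adjS (by decide)) (adjS (by decide)) (adjI h₁)
      (neSlice (by decide)) (neSlice (by decide)) (neSlice (by decide))
      i001 i100 (f₁ _ _ _)
  have i110 : Infected (d+3) 3 A (J x true true false) :=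
    infected_of_three le_rfl (adjS (by decide)) (adjS (by decide)) (adjI h₁)
      (neSlice (by decide)) (neSlice (by decide)) (neSlice (by decide))
      i010 i100 (f₁ _ _ _)
  have i111 : Infected (d+3) 3 A (J x true true true) :=
    infected_of_three le_rfl (adjS (by decide)) (adjS (by decide)) (adjS (by decide))
      (neSlice (by decide)) (neSlice (by decide)) (neSlice (by decide))
      i011 i101 i110
  intro a b c
  rcases a <;> rcases b <;> rcases c
  · exact base x
  · exact i001
  · exact i010
  · exact i011
  · exact i100
  · exact i101
  · exact i110
  · exact i111

/-- the column over 0, seeded with slices 110, 101, 011, becomes full -/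
lemma col0even (base : ∀ y, Infected (d+3) 3 A (J y false false false))
    (s110 : J (zeroV d) true true false ∈ A)
    (s101 : J (zeroV d) true false true ∈ A)
    (s011 : J (zeroV d) false true true ∈ A) :
    ∀ a b c, Infected (d+3) 3 A (J (zeroV d) a b c) := by
  have i100 : Infected (d+3) 3 A (J (zeroV d) true false false) :=
    infected_of_three le_rfl (adjS (by decide)) (adjS (by decide)) (adjS (by decide))
      (neSlice (by decide)) (neSlice (by decide)) (neSlice (by decide))
      (base _) (infected_seed s110) (infected_seed s101)
  have i010 : Infected (d+3) 3 A (J (zeroV d) false true false) :=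
    infected_of_three le_rfl (adjS (by decide)) (adjS (by decide)) (adjS (by decide))
      (neSlice (by decide)) (neSlice (by decide)) (neSlice (by decide))
      (base _) (infected_seed s110) (infected_seed s011)
  have i001 : Infected (d+3) 3 A (J (zeroV d) false false true) :=
    infected_of_three le_rfl (adjS (by decide)) (adjS (by decide)) (adjS (by decide))
      (neSlice (by decide)) (neSlice (by decide)) (neSlice (by decide))
      (base _) (infected_seed s101) (infected_seed s011)
  have i111 : Infected (d+3) 3 A (J (zeroV d) true true true) :=
    infected_of_three le_rfl (adjS (by decide)) (adjS (by decide)) (adjS (by decide))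
      (neSlice (by decide)) (neSlice (by decide)) (neSlice (by decide))
      (infected_seed s110) (infected_seed s101) (infected_seed s011)
  intro a b c
  rcases a <;> rcases b <;> rcases c
  · exact base _
  · exact i001
  · exact i010
  · exact infected_seed s011
  · exact i100
  · exact infected_seed s101
  · exact infected_seed s110
  · exact i111

end Helpers

end BootUp

namespace BootUp

section Spread

variable {d : ℕ} {A : Finset (Fin (d+3) → Bool)}

lemma flip_comm {i j : Fin d} (h : i ≠ j) (x : Fin d → Bool) :
    flip i (flip j x) = flip j (flip i x) := by
  funext m
  simp only [flip_apply]
  split_ifs <;> simp_all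

lemma zero_ne_pair {j k : Fin d} (h : j ≠ k) :
    zeroV d ≠ flip k (flip j (zeroV d)) := by
  intro he
  have := congrFun he k
  rw [flip_self, flip_other h.symm] at this
  simp [zeroV] at this

/-- half of the pair-spread lemma: the column over e_j becomes full -/
lemma pairSpreadHalf (base : ∀ y, Infected (d+3) 3 A (J y false false false))
    {j k : Fin d} (hjk : j ≠ k)
    (col0 : ∀ a b c, Infected (d+3) 3 A (J (zeroV d) a b c))
    (s011 : J (flip k (flip j (zeroV d))) false true true ∈ A)
    (s101 : J (flip k (flip j (zeroV d))) true false true ∈ A) :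
    ∀ a b c, Infected (d+3) 3 A (J (flip j (zeroV d)) a b c) := by
  set z := zeroV d with hz
  set u := flip j z with hu
  set p := flip k u with hp
  have hzu : hammingDist z u = 1 := hammingDist_flip j z
  have huz : hammingDist u z = 1 := hammingDist_flip' j z
  have hup : hammingDist u p = 1 := hammingDist_flip k u
  have hpu : hammingDist p u = 1 := hammingDist_flip' k u
  have hznep : z ≠ p := zero_ne_pair hjk
  have hunez : u ≠ z := flip_ne j z
  have hunep : u ≠ p := flip_ne' 
  -- P1 : (p,001)
  have P1 : Infected (d+3) 3 A (J p false false true) :=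
    infected_of_three le_rfl (adjS (by decide)) (adjS (by decide)) (adjS (by decide))
      (neSlice (by decide)) (neSlice (by decide)) (neSlice (by decide))
      (base p) (infected_seed s011) (infected_seed s101)
  -- P2 : (u,001)
  have P2 : Infected (d+3) 3 A (J u false false true) :=
    infected_of_three le_rfl (adjS (by decide)) (adjI huz) (adjI hup)
      (neSlice (by decide)) (neSlice (by decide)) (neInner (hznep))
      (base u) (col0 _ _ _) P1
  -- P3 : (u,011)
  have P3 : Infected (d+3) 3 A (J u false true true) :=
    infected_of_three le_rfl (adjI huz) (adjI hup) (adjS (by decide))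
      (neInner hznep) (neSlice (by decide)) (neSlice (by decide))
      (col0 _ _ _) (infected_seed s011) P2
  -- P4 : (u,101)
  have P4 : Infected (d+3) 3 A (J u true false true) :=
    infected_of_three le_rfl (adjI huz) (adjI hup) (adjS (by decide))
      (neInner hznep) (neSlice (by decide)) (neSlice (by decide))
      (col0 _ _ _) (infected_seed s101) P2
  -- P5 : (u,010)
  have P5 : Infected (d+3) 3 A (J u false true false) :=
    infected_of_three le_rfl (adjS (by decide)) (adjI huz) (adjS (by decide))
      (neSlice (by decide)) (neSlice (by decide)) (neSlice (by decide))
      (base u) (col0 _ _ _) P3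
  -- P6 : (u,100)
  have P6 : Infected (d+3) 3 A (J u true false false) :=
    infected_of_three le_rfl (adjS (by decide)) (adjI huz) (adjS (by decide))
      (neSlice (by decide)) (neSlice (by decide)) (neSlice (by decide))
      (base u) (col0 _ _ _) P4
  -- P7 : (u,111)
  have P7 : Infected (d+3) 3 A (J u true true true) :=
    infected_of_three le_rfl (adjI huz) (adjS (by decide)) (adjS (by decide))
      (neSlice (by decide)) (neSlice (by decide)) (neSlice (by decide))
      (col0 _ _ _) P3 P4
  -- P8 : (u,110)
  have P8 : Infected (d+3) 3 A (J u true true false) :=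
    infected_of_three le_rfl (adjI huz) (adjS (by decide)) (adjS (by decide))
      (neSlice (by decide)) (neSlice (by decide)) (neSlice (by decide))
      (col0 _ _ _) P6 P5
  intro a b c
  rcases a <;> rcases b <;> rcases c
  · exact base u
  · exact P2
  · exact P5
  · exact P3
  · exact P6
  · exact P4
  · exact P8
  · exact P7

lemma pairSpread (base : ∀ y, Infected (d+3) 3 A (J y false false false))
    {j k : Fin d} (hjk : j ≠ k)
    (col0 : ∀ a b c, Infected (d+3) 3 A (J (zeroV d) a b c))
    (s011 : J (flip k (flip j (zeroV d))) false true true ∈ A)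
    (s101 : J (flip k (flip j (zeroV d))) true false true ∈ A) :
    (∀ a b c, Infected (d+3) 3 A (J (flip j (zeroV d)) a b c)) ∧
    (∀ a b c, Infected (d+3) 3 A (J (flip k (zeroV d)) a b c)) := by
  constructor
  · exact pairSpreadHalf base hjk col0 s011 s101
  · rw [flip_comm hjk.symm (zeroV d)] at s011 s101
    exact pairSpreadHalf base hjk.symm col0 s011 s101

end Spread

section Weight

variable {d : ℕ}

def wt (x : Fin d → Bool) : ℕ := (Finset.univ.filter (fun i => x i = true)).card

lemma wt_flip_lt {x : Fin d → Bool} {j : Fin d} (h : x j = true) : wt (flip j x) < wt x := by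
  apply Finset.card_lt_card
  constructor
  · intro i hi
    rw [Finset.mem_filter] at hi ⊢
    refine ⟨Finset.mem_univ _, ?_⟩
    rcases eq_or_ne i j with rfl|hij
    · rw [flip_self, h] at hi; simp at hi
    · rw [flip_other hij] at hi; exact hi.2
  · intro hsub
    have hj : j ∈ Finset.univ.filter (fun i => x i = true) := by
      rw [Finset.mem_filter]; exact ⟨Finset.mem_univ _, h⟩
    have := hsub hj
    rw [Finset.mem_filter, flip_self, h] at this
    simp at this

lemma wt_zero {x : Fin d → Bool} (h : wt x = 0) : x = zeroV d := by
  funext i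
  by_contra hne
  have hxi : x i = true := by revert hne; cases hx : x i <;> simp [zeroV, hx]
  have hi : i ∈ Finset.univ.filter (fun i => x i = true) :=
    Finset.mem_filter.mpr ⟨Finset.mem_univ _, hxi⟩
  exact Finset.card_ne_zero_of_mem hi h

lemma exists_true_of_wt_ne {x : Fin d → Bool} (h : wt x ≠ 0) : ∃ i, x i = true := by
  rw [wt, ← Nat.pos_iff_ne_zero, Finset.card_pos] at h
  obtain ⟨i, hi⟩ := h
  exact ⟨i, (Finset.mem_filter.mp hi).2⟩

end Weight

end BootUp

namespace BootUp

section AllFull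

variable {d : ℕ} {A : Finset (Fin (d+3) → Bool)}

lemma allFull {K : ℕ} (hK : 2*K ≤ d)
    (base : ∀ y, Infected (d+3) 3 A (J y false false false))
    (col0 : ∀ a b c, Infected (d+3) 3 A (J (zeroV d) a b c))
    (pairs : ∀ k (hk : k < K),
      J (flip ⟨2*k+1, by omega⟩ (flip ⟨2*k, by omega⟩ (zeroV d))) false true true ∈ A ∧
      J (flip ⟨2*k+1, by omega⟩ (flip ⟨2*k, by omega⟩ (zeroV d))) true false true ∈ A) :
    ∀ x : Fin d → Bool, (∀ i : Fin d, x i = true → i.val < 2*K) →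
      ∀ a b c, Infected (d+3) 3 A (J x a b c) := by
  have main : ∀ k, k ≤ K → ∀ x : Fin d → Bool, (∀ i : Fin d, x i = true → i.val < 2*k) →
      ∀ a b c, Infected (d+3) 3 A (J x a b c) := by
    intro k
    induction k with
    | zero =>
        intro _ x hx
        have hxz : x = zeroV d := by
          funext i
          cases hxi : x i
          · rfl
          · exact absurd (hx i hxi) (by omega)
        rw [hxz]; exact col0
    | succ k ih =>
        intro hk
        have hkK : k < K := hk
        have h2k1 : 2*k+1 < d := by omega
        have h2k : 2*k < d := by omega
        set j₀ : Fin d := ⟨2*k, h2k⟩ with hj₀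
        set j₁ : Fin d := ⟨2*k+1, h2k1⟩ with hj₁
        have hj01 : j₀ ≠ j₁ := by
          intro he
          have := congrArg Fin.val he
          simp [hj₀, hj₁] at this
        have hstep : ∀ n, ∀ x : Fin d → Bool, wt x = n →
            (∀ i : Fin d, x i = true → i.val < 2*(k+1)) →
            ∀ a b c, Infected (d+3) 3 A (J x a b c) := by
          intro n
          induction n using Nat.strong_induction_on with
          | _ n ihn =>
            intro x hwt hx
            by_cases h₀ : x j₀ = true <;> by_cases h₁ : x j₁ = true
            · -- both new coordinates set
              refine colSpread base (hammingDist_flip j₀ x) (hammingDist_flip j₁ x)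
                (flip_ne_flip hj01 x) ?_ ?_
              · refine ihn (wt (flip j₀ x)) (hwt ▸ wt_flip_lt h₀) _ rfl ?_
                intro i hi
                rcases eq_or_ne i j₀ with rfl|hij
                · rw [flip_self, h₀] at hi; simp at hi
                · rw [flip_other hij] at hi; exact hx i hi
              · refine ihn (wt (flip j₁ x)) (hwt ▸ wt_flip_lt h₁) _ rfl ?_
                intro i hi
                rcases eq_or_ne i j₁ with rfl|hij
                · rw [flip_self, h₁] at hi; simp at hi
                · rw [flip_other hij] at hi; exact hx i hi
            · -- j₀ set, j₁ not
              have hy : ∀ i : Fin d, flip j₀ x i = true → i.val < 2*k := by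
                intro i hi
                rcases eq_or_ne i j₀ with rfl|hij
                · rw [flip_self, h₀] at hi; simp at hi
                · rw [flip_other hij] at hi
                  have h2 := hx i hi
                  have hv0 : i.val ≠ 2*k := fun hv => hij (Fin.ext (by simp [hj₀, hv]))
                  have hv1 : i.val ≠ 2*k+1 := by
                    intro hv
                    have : i = j₁ := Fin.ext (by simp [hj₁, hv])
                    rw [this] at hi
                    exact h₁ hi
                  omega
              have fy := ih (by omega) (flip j₀ x) hy
              by_cases hw0 : wt (flip j₀ x) = 0
              · have hxu : x = flip j₀ (zeroV d) := by
                  rw [← wt_zero hw0]; exact (flip_flip j₀ x).symm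
                rw [hxu]
                exact (pairSpread base hj01 col0 (pairs k hkK).1 (pairs k hkK).2).1
              · obtain ⟨i₀, hi₀⟩ := exists_true_of_wt_ne hw0
                have hi₀j₀ : i₀ ≠ j₀ := by
                  intro he
                  rw [he, flip_self, h₀] at hi₀; simp at hi₀
                have hxi₀ : x i₀ = true := by rw [← flip_other hi₀j₀ x]; exact hi₀
                refine colSpread base (hammingDist_flip j₀ x) (hammingDist_flip i₀ x)
                  (flip_ne_flip (Ne.symm hi₀j₀) x) fy ?_
                refine ihn (wt (flip i₀ x)) (hwt ▸ wt_flip_lt hxi₀) _ rfl ?_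
                intro i hi
                rcases eq_or_ne i i₀ with rfl|hij
                · rw [flip_self, hxi₀] at hi; simp at hi
                · rw [flip_other hij] at hi; exact hx i hi
            · -- j₁ set, j₀ not
              have hy : ∀ i : Fin d, flip j₁ x i = true → i.val < 2*k := by
                intro i hi
                rcases eq_or_ne i j₁ with rfl|hij
                · rw [flip_self, h₁] at hi; simp at hi
                · rw [flip_other hij] at hi
                  have h2 := hx i hi
                  have hv1 : i.val ≠ 2*k+1 := fun hv => hij (Fin.ext (by simp [hj₁, hv]))
                  have hv0 : i.val ≠ 2*k := by
                    intro hv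
                    have : i = j₀ := Fin.ext (by simp [hj₀, hv])
                    rw [this] at hi
                    exact h₀ hi
                  omega
              have fy := ih (by omega) (flip j₁ x) hy
              by_cases hw0 : wt (flip j₁ x) = 0
              · have hxu : x = flip j₁ (zeroV d) := by
                  rw [← wt_zero hw0]; exact (flip_flip j₁ x).symm
                rw [hxu]
                exact (pairSpread base hj01 col0 (pairs k hkK).1 (pairs k hkK).2).2
              · obtain ⟨i₀, hi₀⟩ := exists_true_of_wt_ne hw0
                have hi₀j₁ : i₀ ≠ j₁ := by
                  intro he
                  rw [he, flip_self, h₁] at hi₀; simp at hi₀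
                have hxi₀ : x i₀ = true := by rw [← flip_other hi₀j₁ x]; exact hi₀
                refine colSpread base (hammingDist_flip j₁ x) (hammingDist_flip i₀ x)
                  (flip_ne_flip (Ne.symm hi₀j₁) x) fy ?_
                refine ihn (wt (flip i₀ x)) (hwt ▸ wt_flip_lt hxi₀) _ rfl ?_
                intro i hi
                rcases eq_or_ne i i₀ with rfl|hij
                · rw [flip_self, hxi₀] at hi; simp at hi
                · rw [flip_other hij] at hi; exact hx i hi
            · -- neither: weight fits in first 2k coordinates
              refine ih (by omega) x ?_
              intro i hi
              have h2 := hx i hi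
              have hv0 : i.val ≠ 2*k := by
                intro hv
                have : i = j₀ := Fin.ext (by simp [hj₀, hv])
                rw [this] at hi; exact h₀ hi
              have hv1 : i.val ≠ 2*k+1 := by
                intro hv
                have : i = j₁ := Fin.ext (by simp [hj₁, hv])
                rw [this] at hi; exact h₁ hi
              omega
        exact fun x hx => hstep (wt x) x rfl hx
  exact main K le_rfl

end AllFull

end BootUp

namespace BootUp

section Odd

variable {d : ℕ} {A : Finset (Fin (d+3) → Bool)}

lemma oddPrep {i0 i1 iL : Fin d} (h01 : i0 ≠ i1) (h0L : i0 ≠ iL) (h1L : i1 ≠ iL)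
    (base : ∀ y, Infected (d+3) 3 A (J y false false false))
    (s011 : J (zeroV d) false true true ∈ A)
    (sp011 : J (flip i1 (flip i0 (zeroV d))) false true true ∈ A)
    (sp101 : J (flip i1 (flip i0 (zeroV d))) true false true ∈ A)
    (sL101 : J (flip iL (zeroV d)) true false true ∈ A)
    (sL110 : J (flip iL (zeroV d)) true true false ∈ A)
    (sU111 : J (flip i0 (zeroV d)) true true true ∈ A) :
    (∀ a b c, Infected (d+3) 3 A (J (zeroV d) a b c)) ∧
    (∀ a b c, Infected (d+3) 3 A (J (flip iL (zeroV d)) a b c)) := by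
  set z := zeroV d with hz
  set u := flip i0 z with hu
  set p := flip i1 u with hp
  set eL := flip iL z with heL
  have hzu : hammingDist z u = 1 := hammingDist_flip i0 z
  have huz : hammingDist u z = 1 := hammingDist_flip' i0 z
  have hup : hammingDist u p = 1 := hammingDist_flip i1 u
  have hzL : hammingDist z eL = 1 := hammingDist_flip iL z
  have hLz : hammingDist eL z = 1 := hammingDist_flip' iL z
  have hznep : z ≠ p := zero_ne_pair h01
  have huneL : u ≠ eL := flip_ne_flip h0L z
  have O1 : Infected (d+3) 3 A (J p false false true) :=
    infected_of_three le_rfl (adjS (by decide)) (adjS (by decide)) (adjS (by decide))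
      (neSlice (by decide)) (neSlice (by decide)) (neSlice (by decide))
      (base p) (infected_seed sp011) (infected_seed sp101)
  have O2 : Infected (d+3) 3 A (J u false true true) :=
    infected_of_three le_rfl (adjI huz) (adjI hup) (adjS (by decide))
      (neInner hznep) (neSlice (by decide)) (neSlice (by decide))
      (infected_seed s011) (infected_seed sp011) (infected_seed sU111)
  have O3 : Infected (d+3) 3 A (J u false false true) :=
    infected_of_three le_rfl (adjS (by decide)) (adjS (by decide)) (adjI hup)
      (neSlice (by decide)) (neSlice (by decide)) (neSlice (by decide))
      (base u) O2 O1
  have O4 : Infected (d+3) 3 A (J z false false true) :=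
    infected_of_three le_rfl (adjS (by decide)) (adjS (by decide)) (adjI hzu)
      (neSlice (by decide)) (neSlice (by decide)) (neSlice (by decide))
      (base z) (infected_seed s011) O3
  have O5 : Infected (d+3) 3 A (J u true false true) :=
    infected_of_three le_rfl (adjS (by decide)) (adjS (by decide)) (adjI hup)
      (neSlice (by decide)) (neSlice (by decide)) (neSlice (by decide))
      O3 (infected_seed sU111) (infected_seed sp101)
  have O6 : Infected (d+3) 3 A (J eL true false false) :=
    infected_of_three le_rfl (adjS (by decide)) (adjS (by decide)) (adjS (by decide))
      (neSlice (by decide)) (neSlice (by decide)) (neSlice (by decide))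
      (base eL) (infected_seed sL101) (infected_seed sL110)
  have O7 : Infected (d+3) 3 A (J eL false false true) :=
    infected_of_three le_rfl (adjS (by decide)) (adjI hLz) (adjS (by decide))
      (neSlice (by decide)) (neSlice (by decide)) (neSlice (by decide))
      (base eL) O4 (infected_seed sL101)
  have O8 : Infected (d+3) 3 A (J z true false true) :=
    infected_of_three le_rfl (adjS (by decide)) (adjI hzu) (adjI hzL)
      (neSlice (by decide)) (neSlice (by decide)) (neInner huneL)
      O4 O5 (infected_seed sL101)
  have O9 : Infected (d+3) 3 A (J z true false false) :=
    infected_of_three le_rfl (adjS (by decide)) (adjS (by decide)) (adjI hzL)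
      (neSlice (by decide)) (neSlice (by decide)) (neSlice (by decide))
      (base z) O8 O6
  have O10 : Infected (d+3) 3 A (J z true true true) :=
    infected_of_three le_rfl (adjS (by decide)) (adjS (by decide)) (adjI hzu)
      (neSlice (by decide)) (neSlice (by decide)) (neSlice (by decide))
      (infected_seed s011) O8 (infected_seed sU111)
  have O11 : Infected (d+3) 3 A (J z true true false) :=
    infected_of_three le_rfl (adjS (by decide)) (adjS (by decide)) (adjI hzL)
      (neSlice (by decide)) (neSlice (by decide)) (neSlice (by decide))
      O9 O10 (infected_seed sL110)
  have O12 : Infected (d+3) 3 A (J z false true false) :=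
    infected_of_three le_rfl (adjS (by decide)) (adjS (by decide)) (adjS (by decide))
      (neSlice (by decide)) (neSlice (by decide)) (neSlice (by decide))
      (base z) (infected_seed s011) O11
  have col0 : ∀ a b c, Infected (d+3) 3 A (J z a b c) := by
    intro a b c
    rcases a <;> rcases b <;> rcases c
    · exact base z
    · exact O4
    · exact O12
    · exact infected_seed s011
    · exact O9
    · exact O8
    · exact O11
    · exact O10
  have L1 : Infected (d+3) 3 A (J eL false true false) :=
    infected_of_three le_rfl (adjS (by decide)) (adjS (by decide)) (adjI hLz)
      (neSlice (by decide)) (neSlice (by decide)) (neSlice (by decide))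
      (base eL) (infected_seed sL110) O12
  have L2 : Infected (d+3) 3 A (J eL false true true) :=
    infected_of_three le_rfl (adjS (by decide)) (adjS (by decide)) (adjI hLz)
      (neSlice (by decide)) (neSlice (by decide)) (neSlice (by decide))
      O7 L1 (infected_seed s011)
  have L3 : Infected (d+3) 3 A (J eL true true true) :=
    infected_of_three le_rfl (adjS (by decide)) (adjS (by decide)) (adjI hLz)
      (neSlice (by decide)) (neSlice (by decide)) (neSlice (by decide))
      (infected_seed sL101) (infected_seed sL110) O10
  refine ⟨col0, ?_⟩
  intro a b c
  rcases a <;> rcases b <;> rcases c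
  · exact base eL
  · exact O7
  · exact L1
  · exact L2
  · exact O6
  · exact infected_seed sL101
  · exact infected_seed sL110
  · exact L3

lemma allFullOdd {K : ℕ} (hd : d = 2*K+1)
    (base : ∀ y, Infected (d+3) 3 A (J y false false false))
    (full2K : ∀ x : Fin d → Bool, (∀ i : Fin d, x i = true → i.val < 2*K) →
      ∀ a b c, Infected (d+3) 3 A (J x a b c))
    (fL : ∀ a b c, Infected (d+3) 3 A (J (flip ⟨2*K, by omega⟩ (zeroV d)) a b c)) :
    ∀ (x : Fin d → Bool) a b c, Infected (d+3) 3 A (J x a b c) := by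
  set iL : Fin d := ⟨2*K, by omega⟩ with hiL
  have h0 : ∀ x : Fin d → Bool, x iL = false → ∀ a b c, Infected (d+3) 3 A (J x a b c) := by
    intro x hxL
    apply full2K
    intro i hi
    have h2 : i.val < 2*K+1 := hd ▸ i.isLt
    have : i.val ≠ 2*K := by
      intro hv
      have : i = iL := Fin.ext (by simp [hiL, hv])
      rw [this, hxL] at hi; simp at hi
    omega
  have hstep : ∀ n (x : Fin d → Bool), wt x = n → x iL = true →
      ∀ a b c, Infected (d+3) 3 A (J x a b c) := by
    intro n
    induction n using Nat.strong_induction_on with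
    | _ n ihn =>
      intro x hwt hxL
      have hyL : flip iL x iL = false := by rw [flip_self, hxL]; rfl
      have fy := h0 (flip iL x) hyL
      by_cases hw0 : wt (flip iL x) = 0
      · have hxu : x = flip iL (zeroV d) := by
          rw [← wt_zero hw0]; exact (flip_flip iL x).symm
        rw [hxu]; exact fL
      · obtain ⟨i₀, hi₀⟩ := exists_true_of_wt_ne hw0
        have hi₀L : i₀ ≠ iL := by
          intro he; rw [he, hyL] at hi₀; simp at hi₀
        have hxi₀ : x i₀ = true := by rw [← flip_other hi₀L x]; exact hi₀
        refine colSpread base (hammingDist_flip iL x) (hammingDist_flip i₀ x)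
          (flip_ne_flip (Ne.symm hi₀L) x) fy ?_
        refine ihn (wt (flip i₀ x)) (hwt ▸ wt_flip_lt hxi₀) _ rfl ?_
        rw [flip_other (Ne.symm hi₀L)]; exact hxL
  intro x
  cases hxL : x iL
  · exact h0 x hxL
  · exact hstep (wt x) x rfl hxL

end Odd

end BootUp

namespace BootUp

section Gadgets

def gadEven (d K : ℕ) (hK : 2*K ≤ d) : Finset (Fin (d+3) → Bool) :=
  {J (zeroV d) true true false, J (zeroV d) true false true, J (zeroV d) false true true} ∪
  (Finset.univ : Finset (Fin K × Bool)).image (fun kb =>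
    J (flip ⟨2*kb.1.val+1, by have := kb.1.isLt; omega⟩
        (flip ⟨2*kb.1.val, by have := kb.1.isLt; omega⟩ (zeroV d)))
      kb.2 (!kb.2) true)

lemma gadEven_card (d K : ℕ) (hK : 2*K ≤ d) : (gadEven d K hK).card ≤ 3 + 2*K := by
  refine (Finset.card_union_le _ _).trans ?_
  have h1 : ({J (zeroV d) true true false, J (zeroV d) true false true,
      J (zeroV d) false true true} : Finset (Fin (d+3) → Bool)).card ≤ 3 := by
    refine (Finset.card_insert_le _ _).trans ?_
    refine Nat.succ_le_succ ?_
    refine (Finset.card_insert_le _ _).trans ?_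
    simp
  have h2 := (Finset.card_image_le (s := (Finset.univ : Finset (Fin K × Bool)))
    (f := fun kb =>
      J (flip ⟨2*kb.1.val+1, by have := kb.1.isLt; omega⟩
          (flip ⟨2*kb.1.val, by have := kb.1.isLt; omega⟩ (zeroV d)))
        kb.2 (!kb.2) true))
  rw [Finset.card_univ] at h2
  simp only [Fintype.card_prod, Fintype.card_fin, Fintype.card_bool] at h2
  omega

def gadOdd (d K : ℕ) (hd : d = 2*K+1) : Finset (Fin (d+3) → Bool) :=
  {J (zeroV d) false true true,
   J (flip ⟨2*K, by omega⟩ (zeroV d)) true false true,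
   J (flip ⟨2*K, by omega⟩ (zeroV d)) true true false,
   J (flip ⟨0, by omega⟩ (zeroV d)) true true true} ∪
  (Finset.univ : Finset (Fin K × Bool)).image (fun kb =>
    J (flip ⟨2*kb.1.val+1, by have := kb.1.isLt; omega⟩
        (flip ⟨2*kb.1.val, by have := kb.1.isLt; omega⟩ (zeroV d)))
      kb.2 (!kb.2) true)

lemma gadOdd_card (d K : ℕ) (hd : d = 2*K+1) : (gadOdd d K hd).card ≤ 4 + 2*K := by
  refine (Finset.card_union_le _ _).trans ?_
  have h1 : ({J (zeroV d) false true true,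
      J (flip ⟨2*K, by omega⟩ (zeroV d)) true false true,
      J (flip ⟨2*K, by omega⟩ (zeroV d)) true true false,
      J (flip ⟨0, by omega⟩ (zeroV d)) true true true} : Finset (Fin (d+3) → Bool)).card ≤ 4 := by
    refine (Finset.card_insert_le _ _).trans (Nat.succ_le_succ ?_)
    refine (Finset.card_insert_le _ _).trans (Nat.succ_le_succ ?_)
    refine (Finset.card_insert_le _ _).trans (Nat.succ_le_succ ?_)
    simp
  have h2 := (Finset.card_image_le (s := (Finset.univ : Finset (Fin K × Bool)))
    (f := fun kb =>
      J (flip ⟨2*kb.1.val+1, by have := kb.1.isLt; omega⟩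
          (flip ⟨2*kb.1.val, by have := kb.1.isLt; omega⟩ (zeroV d)))
        kb.2 (!kb.2) true))
  rw [Finset.card_univ] at h2
  simp only [Fintype.card_prod, Fintype.card_fin, Fintype.card_bool] at h2
  omega

lemma step {d : ℕ} (hd1 : d ≠ 1) {Ainner : Finset (Fin d → Bool)}
    (hperc : Percolates d 3 Ainner) :
    ∃ B : Finset (Fin (d+3) → Bool), B.card ≤ Ainner.card + (d+3) ∧ Percolates (d+3) 3 B := by
  rcases Nat.even_or_odd d with ⟨K, hK⟩ | ⟨K, hK⟩
  · -- even case
    have hK' : 2*K ≤ d := by omega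
    set B := Ainner.image (fun x => J x false false false) ∪ gadEven d K hK' with hB
    have base : ∀ y, Infected (d+3) 3 B (J y false false false) :=
      transfer Finset.subset_union_left hperc
    have s110 : J (zeroV d) true true false ∈ B := by
      refine Finset.mem_union_right _ (Finset.mem_union_left _ ?_); simp
    have s101 : J (zeroV d) true false true ∈ B := by
      refine Finset.mem_union_right _ (Finset.mem_union_left _ ?_); simp
    have s011 : J (zeroV d) false true true ∈ B := by
      refine Finset.mem_union_right _ (Finset.mem_union_left _ ?_); simp
    have col0 := col0even base s110 s101 s011
    have pairs : ∀ k (hk : k < K),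
        J (flip ⟨2*k+1, by omega⟩ (flip ⟨2*k, by omega⟩ (zeroV d))) false true true ∈ B ∧
        J (flip ⟨2*k+1, by omega⟩ (flip ⟨2*k, by omega⟩ (zeroV d))) true false true ∈ B := by
      intro k hk
      constructor
      · refine Finset.mem_union_right _ (Finset.mem_union_right _ ?_)
        exact Finset.mem_image.mpr ⟨(⟨k, hk⟩, false), Finset.mem_univ _, rfl⟩
      · refine Finset.mem_union_right _ (Finset.mem_union_right _ ?_)
        exact Finset.mem_image.mpr ⟨(⟨k, hk⟩, true), Finset.mem_univ _, rfl⟩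
    have full := allFull hK' base col0 pairs
    refine ⟨B, ?_, ?_⟩
    · refine (Finset.card_union_le _ _).trans ?_
      have := Finset.card_image_le (s := Ainner) (f := fun x => J x false false false)
      have := gadEven_card d K hK'
      omega
    · apply percolates_of_forall
      intro v
      obtain ⟨x, a, b, c, rfl⟩ := J_surj v
      exact full x (fun i _ => by have := i.isLt; omega) a b c
  · -- odd case
    have hd : d = 2*K + 1 := by omega
    have hK1 : 1 ≤ K := by omega
    set B := Ainner.image (fun x => J x false false false) ∪ gadOdd d K hd with hB
    have base : ∀ y, Infected (d+3) 3 B (J y false false false) :=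
      transfer Finset.subset_union_left hperc
    have s011 : J (zeroV d) false true true ∈ B := by
      refine Finset.mem_union_right _ (Finset.mem_union_left _ ?_); simp
    have sL101 : J (flip ⟨2*K, by omega⟩ (zeroV d)) true false true ∈ B := by
      refine Finset.mem_union_right _ (Finset.mem_union_left _ ?_); simp [gadOdd]
    have sL110 : J (flip ⟨2*K, by omega⟩ (zeroV d)) true true false ∈ B := by
      refine Finset.mem_union_right _ (Finset.mem_union_left _ ?_); simp [gadOdd]
    have sU111 : J (flip ⟨0, by omega⟩ (zeroV d)) true true true ∈ B := by
      refine Finset.mem_union_right _ (Finset.mem_union_left _ ?_); simp [gadOdd]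
    have pairs : ∀ k (hk : k < K),
        J (flip ⟨2*k+1, by omega⟩ (flip ⟨2*k, by omega⟩ (zeroV d))) false true true ∈ B ∧
        J (flip ⟨2*k+1, by omega⟩ (flip ⟨2*k, by omega⟩ (zeroV d))) true false true ∈ B := by
      intro k hk
      constructor
      · refine Finset.mem_union_right _ (Finset.mem_union_right _ ?_)
        exact Finset.mem_image.mpr ⟨(⟨k, hk⟩, false), Finset.mem_univ _, rfl⟩
      · refine Finset.mem_union_right _ (Finset.mem_union_right _ ?_)
        exact Finset.mem_image.mpr ⟨(⟨k, hk⟩, true), Finset.mem_univ _, rfl⟩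
    have sp011 : J (flip ⟨1, by omega⟩ (flip ⟨0, by omega⟩ (zeroV d))) false true true ∈ B :=
      (pairs 0 hK1).1
    have sp101 : J (flip ⟨1, by omega⟩ (flip ⟨0, by omega⟩ (zeroV d))) true false true ∈ B :=
      (pairs 0 hK1).2
    have hne01 : (⟨0, by omega⟩ : Fin d) ≠ ⟨1, by omega⟩ := by
      intro he; have := congrArg Fin.val he; simp at this
    have hne0L : (⟨0, by omega⟩ : Fin d) ≠ ⟨2*K, by omega⟩ := by
      intro he; have := congrArg Fin.val he; simp at this; omega
    have hne1L : (⟨1, by omega⟩ : Fin d) ≠ ⟨2*K, by omega⟩ := by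
      intro he; have := congrArg Fin.val he; simp at this; omega
    obtain ⟨col0, fL⟩ := oddPrep hne01 hne0L hne1L base s011 sp011 sp101 sL101 sL110 sU111
    have full2K := allFull (show 2*K ≤ d by omega) base col0 pairs
    have full := allFullOdd hd base full2K fL
    refine ⟨B, ?_, ?_⟩
    · refine (Finset.card_union_le _ _).trans ?_
      have := Finset.card_image_le (s := Ainner) (f := fun x => J x false false false)
      have := gadOdd_card d K hd
      omega
    · apply percolates_of_forall
      intro v
      obtain ⟨x, a, b, c, rfl⟩ := J_surj v
      exact full x a b c

end Gadgets

end BootUp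

namespace BootUp

lemma base4 : ∃ A : Finset (Fin 4 → Bool), A.card ≤ 6 ∧ Percolates 4 3 A := by
  refine ⟨({![false, false, false, false], ![true, true, false, false], ![true, false, true, false], ![false, true, false, true], ![false, false, true, true], ![true, true, true, true]} : Finset (Fin 4 → Bool)), by decide, ?_⟩
  apply percolates_of_forall
  have I0000 : Infected 4 3 ({![false, false, false, false], ![true, true, false, false], ![true, false, true, false], ![false, true, false, true], ![false, false, true, true], ![true, true, true, true]} : Finset (Fin 4 → Bool)) ![false, false, false, false] :=
    infected_seed (by decide)
  have I0011 : Infected 4 3 ({![false, false, false, false], ![true, true, false, false], ![true, false, true, false], ![false, true, false, true], ![false, false, true, true], ![true, true, true, true]} : Finset (Fin 4 → Bool)) ![true, true, false, false] :=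
    infected_seed (by decide)
  have I0101 : Infected 4 3 ({![false, false, false, false], ![true, true, false, false], ![true, false, true, false], ![false, true, false, true], ![false, false, true, true], ![true, true, true, true]} : Finset (Fin 4 → Bool)) ![true, false, true, false] :=
    infected_seed (by decide)
  have I1010 : Infected 4 3 ({![false, false, false, false], ![true, true, false, false], ![true, false, true, false], ![false, true, false, true], ![false, false, true, true], ![true, true, true, true]} : Finset (Fin 4 → Bool)) ![false, true, false, true] :=
    infected_seed (by decide)
  have I1100 : Infected 4 3 ({![false, false, false, false], ![true, true, false, false], ![true, false, true, false], ![false, true, false, true], ![false, false, true, true], ![true, true, true, true]} : Finset (Fin 4 → Bool)) ![false, false, true, true] :=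
    infected_seed (by decide)
  have I1111 : Infected 4 3 ({![false, false, false, false], ![true, true, false, false], ![true, false, true, false], ![false, true, false, true], ![false, false, true, true], ![true, true, true, true]} : Finset (Fin 4 → Bool)) ![true, true, true, true] :=
    infected_seed (by decide)
  have I0001 : Infected 4 3 ({![false, false, false, false], ![true, true, false, false], ![true, false, true, false], ![false, true, false, true], ![false, false, true, true], ![true, true, true, true]} : Finset (Fin 4 → Bool)) ![true, false, false, false] :=
    infected_of_three le_rfl (by decide) (by decide) (by decide) (by decide) (by decide) (by decide) I0000 I0011 I0101
  have I0010 : Infected 4 3 ({![false, false, false, false], ![true, true, false, false], ![true, false, true, false], ![false, true, false, true], ![false, false, true, true], ![true, true, true, true]} : Finset (Fin 4 → Bool)) ![false, true, false, false] :=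
    infected_of_three le_rfl (by decide) (by decide) (by decide) (by decide) (by decide) (by decide) I0011 I0000 I1010
  have I0100 : Infected 4 3 ({![false, false, false, false], ![true, true, false, false], ![true, false, true, false], ![false, true, false, true], ![false, false, true, true], ![true, true, true, true]} : Finset (Fin 4 → Bool)) ![false, false, true, false] :=
    infected_of_three le_rfl (by decide) (by decide) (by decide) (by decide) (by decide) (by decide) I0101 I0000 I1100
  have I0111 : Infected 4 3 ({![false, false, false, false], ![true, true, false, false], ![true, false, true, false], ![false, true, false, true], ![false, false, true, true], ![true, true, true, true]} : Finset (Fin 4 → Bool)) ![true, true, true, false] :=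
    infected_of_three le_rfl (by decide) (by decide) (by decide) (by decide) (by decide) (by decide) I0101 I0011 I1111
  have I1000 : Infected 4 3 ({![false, false, false, false], ![true, true, false, false], ![true, false, true, false], ![false, true, false, true], ![false, false, true, true], ![true, true, true, true]} : Finset (Fin 4 → Bool)) ![false, false, false, true] :=
    infected_of_three le_rfl (by decide) (by decide) (by decide) (by decide) (by decide) (by decide) I1010 I1100 I0000
  have I1011 : Infected 4 3 ({![false, false, false, false], ![true, true, false, false], ![true, false, true, false], ![false, true, false, true], ![false, false, true, true], ![true, true, true, true]} : Finset (Fin 4 → Bool)) ![true, true, false, true] :=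
    infected_of_three le_rfl (by decide) (by decide) (by decide) (by decide) (by decide) (by decide) I1010 I1111 I0011
  have I1101 : Infected 4 3 ({![false, false, false, false], ![true, true, false, false], ![true, false, true, false], ![false, true, false, true], ![false, false, true, true], ![true, true, true, true]} : Finset (Fin 4 → Bool)) ![true, false, true, true] :=
    infected_of_three le_rfl (by decide) (by decide) (by decide) (by decide) (by decide) (by decide) I1100 I1111 I0101
  have I1110 : Infected 4 3 ({![false, false, false, false], ![true, true, false, false], ![true, false, true, false], ![false, true, false, true], ![false, false, true, true], ![true, true, true, true]} : Finset (Fin 4 → Bool)) ![false, true, true, true] :=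
    infected_of_three le_rfl (by decide) (by decide) (by decide) (by decide) (by decide) (by decide) I1111 I1100 I1010
  have I0110 : Infected 4 3 ({![false, false, false, false], ![true, true, false, false], ![true, false, true, false], ![false, true, false, true], ![false, false, true, true], ![true, true, true, true]} : Finset (Fin 4 → Bool)) ![false, true, true, false] :=
    infected_of_three le_rfl (by decide) (by decide) (by decide) (by decide) (by decide) (by decide) I0111 I0100 I0010
  have I1001 : Infected 4 3 ({![false, false, false, false], ![true, true, false, false], ![true, false, true, false], ![false, true, false, true], ![false, false, true, true], ![true, true, true, true]} : Finset (Fin 4 → Bool)) ![true, false, false, true] :=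
    infected_of_three le_rfl (by decide) (by decide) (by decide) (by decide) (by decide) (by decide) I1000 I1011 I1101
  intro v
  have hv : v = ![v 0, v 1, v 2, v 3] := by funext i; fin_cases i <;> rfl
  rw [hv]
  cases h0 : v 0 <;> cases h1 : v 1 <;> cases h2 : v 2 <;> cases h3 : v 3
  · exact I0000
  · exact I1000
  · exact I0100
  · exact I1100
  · exact I0010
  · exact I1010
  · exact I0110
  · exact I1110
  · exact I0001
  · exact I1001
  · exact I0101
  · exact I1101
  · exact I0011
  · exact I1011
  · exact I0111
  · exact I1111

lemma base5 : ∃ A : Finset (Fin 5 → Bool), A.card ≤ 8 ∧ Percolates 5 3 A := by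
  refine ⟨({![false, false, false, false, false], ![true, false, false, false, false], ![false, true, true, false, false], ![false, true, false, true, false], ![true, false, true, true, false], ![true, true, false, false, true], ![false, false, true, false, true], ![false, false, false, true, true]} : Finset (Fin 5 → Bool)), by decide, ?_⟩
  apply percolates_of_forall
  have I00000 : Infected 5 3 ({![false, false, false, false, false], ![true, false, false, false, false], ![false, true, true, false, false], ![false, true, false, true, false], ![true, false, true, true, false], ![true, true, false, false, true], ![false, false, true, false, true], ![false, false, false, true, true]} : Finset (Fin 5 → Bool)) ![false, false, false, false, false] :=
    infected_seed (by decide)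
  have I00001 : Infected 5 3 ({![false, false, false, false, false], ![true, false, false, false, false], ![false, true, true, false, false], ![false, true, false, true, false], ![true, false, true, true, false], ![true, true, false, false, true], ![false, false, true, false, true], ![false, false, false, true, true]} : Finset (Fin 5 → Bool)) ![true, false, false, false, false] :=
    infected_seed (by decide)
  have I00110 : Infected 5 3 ({![false, false, false, false, false], ![true, false, false, false, false], ![false, true, true, false, false], ![false, true, false, true, false], ![true, false, true, true, false], ![true, true, false, false, true], ![false, false, true, false, true], ![false, false, false, true, true]} : Finset (Fin 5 → Bool)) ![false, true, true, false, false] :=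
    infected_seed (by decide)
  have I01010 : Infected 5 3 ({![false, false, false, false, false], ![true, false, false, false, false], ![false, true, true, false, false], ![false, true, false, true, false], ![true, false, true, true, false], ![true, true, false, false, true], ![false, false, true, false, true], ![false, false, false, true, true]} : Finset (Fin 5 → Bool)) ![false, true, false, true, false] :=
    infected_seed (by decide)
  have I01101 : Infected 5 3 ({![false, false, false, false, false], ![true, false, false, false, false], ![false, true, true, false, false], ![false, true, false, true, false], ![true, false, true, true, false], ![true, true, false, false, true], ![false, false, true, false, true], ![false, false, false, true, true]} : Finset (Fin 5 → Bool)) ![true, false, true, true, false] :=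
    infected_seed (by decide)
  have I10011 : Infected 5 3 ({![false, false, false, false, false], ![true, false, false, false, false], ![false, true, true, false, false], ![false, true, false, true, false], ![true, false, true, true, false], ![true, true, false, false, true], ![false, false, true, false, true], ![false, false, false, true, true]} : Finset (Fin 5 → Bool)) ![true, true, false, false, true] :=
    infected_seed (by decide)
  have I10100 : Infected 5 3 ({![false, false, false, false, false], ![true, false, false, false, false], ![false, true, true, false, false], ![false, true, false, true, false], ![true, false, true, true, false], ![true, true, false, false, true], ![false, false, true, false, true], ![false, false, false, true, true]} : Finset (Fin 5 → Bool)) ![false, false, true, false, true] :=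
    infected_seed (by decide)
  have I11000 : Infected 5 3 ({![false, false, false, false, false], ![true, false, false, false, false], ![false, true, true, false, false], ![false, true, false, true, false], ![true, false, true, true, false], ![true, true, false, false, true], ![false, false, true, false, true], ![false, false, false, true, true]} : Finset (Fin 5 → Bool)) ![false, false, false, true, true] :=
    infected_seed (by decide)
  have I00010 : Infected 5 3 ({![false, false, false, false, false], ![true, false, false, false, false], ![false, true, true, false, false], ![false, true, false, true, false], ![true, false, true, true, false], ![true, true, false, false, true], ![false, false, true, false, true], ![false, false, false, true, true]} : Finset (Fin 5 → Bool)) ![false, true, false, false, false] :=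
    infected_of_three le_rfl (by decide) (by decide) (by decide) (by decide) (by decide) (by decide) I00000 I00110 I01010
  have I00011 : Infected 5 3 ({![false, false, false, false, false], ![true, false, false, false, false], ![false, true, true, false, false], ![false, true, false, true, false], ![true, false, true, true, false], ![true, true, false, false, true], ![false, false, true, false, true], ![false, false, false, true, true]} : Finset (Fin 5 → Bool)) ![true, true, false, false, false] :=
    infected_of_three le_rfl (by decide) (by decide) (by decide) (by decide) (by decide) (by decide) I00010 I00001 I10011
  have I00100 : Infected 5 3 ({![false, false, false, false, false], ![true, false, false, false, false], ![false, true, true, false, false], ![false, true, false, true, false], ![true, false, true, true, false], ![true, true, false, false, true], ![false, false, true, false, true], ![false, false, false, true, true]} : Finset (Fin 5 → Bool)) ![false, false, true, false, false] :=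
    infected_of_three le_rfl (by decide) (by decide) (by decide) (by decide) (by decide) (by decide) I00110 I00000 I10100
  have I00101 : Infected 5 3 ({![false, false, false, false, false], ![true, false, false, false, false], ![false, true, true, false, false], ![false, true, false, true, false], ![true, false, true, true, false], ![true, true, false, false, true], ![false, false, true, false, true], ![false, false, false, true, true]} : Finset (Fin 5 → Bool)) ![true, false, true, false, false] :=
    infected_of_three le_rfl (by decide) (by decide) (by decide) (by decide) (by decide) (by decide) I00100 I00001 I01101
  have I00111 : Infected 5 3 ({![false, false, false, false, false], ![true, false, false, false, false], ![false, true, true, false, false], ![false, true, false, true, false], ![true, false, true, true, false], ![true, true, false, false, true], ![false, false, true, false, true], ![false, false, false, true, true]} : Finset (Fin 5 → Bool)) ![true, true, true, false, false] :=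
    infected_of_three le_rfl (by decide) (by decide) (by decide) (by decide) (by decide) (by decide) I00110 I00101 I00011
  have I01000 : Infected 5 3 ({![false, false, false, false, false], ![true, false, false, false, false], ![false, true, true, false, false], ![false, true, false, true, false], ![true, false, true, true, false], ![true, true, false, false, true], ![false, false, true, false, true], ![false, false, false, true, true]} : Finset (Fin 5 → Bool)) ![false, false, false, true, false] :=
    infected_of_three le_rfl (by decide) (by decide) (by decide) (by decide) (by decide) (by decide) I01010 I00000 I11000
  have I01001 : Infected 5 3 ({![false, false, false, false, false], ![true, false, false, false, false], ![false, true, true, false, false], ![false, true, false, true, false], ![true, false, true, true, false], ![true, true, false, false, true], ![false, false, true, false, true], ![false, false, false, true, true]} : Finset (Fin 5 → Bool)) ![true, false, false, true, false] :=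
    infected_of_three le_rfl (by decide) (by decide) (by decide) (by decide) (by decide) (by decide) I01000 I01101 I00001
  have I01011 : Infected 5 3 ({![false, false, false, false, false], ![true, false, false, false, false], ![false, true, true, false, false], ![false, true, false, true, false], ![true, false, true, true, false], ![true, true, false, false, true], ![false, false, true, false, true], ![false, false, false, true, true]} : Finset (Fin 5 → Bool)) ![true, true, false, true, false] :=
    infected_of_three le_rfl (by decide) (by decide) (by decide) (by decide) (by decide) (by decide) I01010 I01001 I00011
  have I01100 : Infected 5 3 ({![false, false, false, false, false], ![true, false, false, false, false], ![false, true, true, false, false], ![false, true, false, true, false], ![true, false, true, true, false], ![true, true, false, false, true], ![false, false, true, false, true], ![false, false, false, true, true]} : Finset (Fin 5 → Bool)) ![false, false, true, true, false] :=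
    infected_of_three le_rfl (by decide) (by decide) (by decide) (by decide) (by decide) (by decide) I01101 I01000 I00100
  have I01110 : Infected 5 3 ({![false, false, false, false, false], ![true, false, false, false, false], ![false, true, true, false, false], ![false, true, false, true, false], ![true, false, true, true, false], ![true, true, false, false, true], ![false, false, true, false, true], ![false, false, false, true, true]} : Finset (Fin 5 → Bool)) ![false, true, true, true, false] :=
    infected_of_three le_rfl (by decide) (by decide) (by decide) (by decide) (by decide) (by decide) I01100 I01010 I00110
  have I01111 : Infected 5 3 ({![false, false, false, false, false], ![true, false, false, false, false], ![false, true, true, false, false], ![false, true, false, true, false], ![true, false, true, true, false], ![true, true, false, false, true], ![false, false, true, false, true], ![false, false, false, true, true]} : Finset (Fin 5 → Bool)) ![true, true, true, true, false] :=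
    infected_of_three le_rfl (by decide) (by decide) (by decide) (by decide) (by decide) (by decide) I01110 I01101 I01011
  have I10000 : Infected 5 3 ({![false, false, false, false, false], ![true, false, false, false, false], ![false, true, true, false, false], ![false, true, false, true, false], ![true, false, true, true, false], ![true, true, false, false, true], ![false, false, true, false, true], ![false, false, false, true, true]} : Finset (Fin 5 → Bool)) ![false, false, false, false, true] :=
    infected_of_three le_rfl (by decide) (by decide) (by decide) (by decide) (by decide) (by decide) I10100 I11000 I00000
  have I10001 : Infected 5 3 ({![false, false, false, false, false], ![true, false, false, false, false], ![false, true, true, false, false], ![false, true, false, true, false], ![true, false, true, true, false], ![true, true, false, false, true], ![false, false, true, false, true], ![false, false, false, true, true]} : Finset (Fin 5 → Bool)) ![true, false, false, false, true] :=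
    infected_of_three le_rfl (by decide) (by decide) (by decide) (by decide) (by decide) (by decide) I10000 I10011 I00001
  have I10010 : Infected 5 3 ({![false, false, false, false, false], ![true, false, false, false, false], ![false, true, true, false, false], ![false, true, false, true, false], ![true, false, true, true, false], ![true, true, false, false, true], ![false, false, true, false, true], ![false, false, false, true, true]} : Finset (Fin 5 → Bool)) ![false, true, false, false, true] :=
    infected_of_three le_rfl (by decide) (by decide) (by decide) (by decide) (by decide) (by decide) I10011 I10000 I00010
  have I10101 : Infected 5 3 ({![false, false, false, false, false], ![true, false, false, false, false], ![false, true, true, false, false], ![false, true, false, true, false], ![true, false, true, true, false], ![true, true, false, false, true], ![false, false, true, false, true], ![false, false, false, true, true]} : Finset (Fin 5 → Bool)) ![true, false, true, false, true] :=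
    infected_of_three le_rfl (by decide) (by decide) (by decide) (by decide) (by decide) (by decide) I10100 I10001 I00101
  have I10110 : Infected 5 3 ({![false, false, false, false, false], ![true, false, false, false, false], ![false, true, true, false, false], ![false, true, false, true, false], ![true, false, true, true, false], ![true, true, false, false, true], ![false, false, true, false, true], ![false, false, false, true, true]} : Finset (Fin 5 → Bool)) ![false, true, true, false, true] :=
    infected_of_three le_rfl (by decide) (by decide) (by decide) (by decide) (by decide) (by decide) I10100 I10010 I00110
  have I10111 : Infected 5 3 ({![false, false, false, false, false], ![true, false, false, false, false], ![false, true, true, false, false], ![false, true, false, true, false], ![true, false, true, true, false], ![true, true, false, false, true], ![false, false, true, false, true], ![false, false, false, true, true]} : Finset (Fin 5 → Bool)) ![true, true, true, false, true] :=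
    infected_of_three le_rfl (by decide) (by decide) (by decide) (by decide) (by decide) (by decide) I10110 I10101 I10011
  have I11001 : Infected 5 3 ({![false, false, false, false, false], ![true, false, false, false, false], ![false, true, true, false, false], ![false, true, false, true, false], ![true, false, true, true, false], ![true, true, false, false, true], ![false, false, true, false, true], ![false, false, false, true, true]} : Finset (Fin 5 → Bool)) ![true, false, false, true, true] :=
    infected_of_three le_rfl (by decide) (by decide) (by decide) (by decide) (by decide) (by decide) I11000 I10001 I01001
  have I11010 : Infected 5 3 ({![false, false, false, false, false], ![true, false, false, false, false], ![false, true, true, false, false], ![false, true, false, true, false], ![true, false, true, true, false], ![true, true, false, false, true], ![false, false, true, false, true], ![false, false, false, true, true]} : Finset (Fin 5 → Bool)) ![false, true, false, true, true] :=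
    infected_of_three le_rfl (by decide) (by decide) (by decide) (by decide) (by decide) (by decide) I11000 I10010 I01010
  have I11011 : Infected 5 3 ({![false, false, false, false, false], ![true, false, false, false, false], ![false, true, true, false, false], ![false, true, false, true, false], ![true, false, true, true, false], ![true, true, false, false, true], ![false, false, true, false, true], ![false, false, false, true, true]} : Finset (Fin 5 → Bool)) ![true, true, false, true, true] :=
    infected_of_three le_rfl (by decide) (by decide) (by decide) (by decide) (by decide) (by decide) I11010 I11001 I10011
  have I11100 : Infected 5 3 ({![false, false, false, false, false], ![true, false, false, false, false], ![false, true, true, false, false], ![false, true, false, true, false], ![true, false, true, true, false], ![true, true, false, false, true], ![false, false, true, false, true], ![false, false, false, true, true]} : Finset (Fin 5 → Bool)) ![false, false, true, true, true] :=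
    infected_of_three le_rfl (by decide) (by decide) (by decide) (by decide) (by decide) (by decide) I11000 I10100 I01100
  have I11101 : Infected 5 3 ({![false, false, false, false, false], ![true, false, false, false, false], ![false, true, true, false, false], ![false, true, false, true, false], ![true, false, true, true, false], ![true, true, false, false, true], ![false, false, true, false, true], ![false, false, false, true, true]} : Finset (Fin 5 → Bool)) ![true, false, true, true, true] :=
    infected_of_three le_rfl (by decide) (by decide) (by decide) (by decide) (by decide) (by decide) I11100 I11001 I10101
  have I11110 : Infected 5 3 ({![false, false, false, false, false], ![true, false, false, false, false], ![false, true, true, false, false], ![false, true, false, true, false], ![true, false, true, true, false], ![true, true, false, false, true], ![false, false, true, false, true], ![false, false, false, true, true]} : Finset (Fin 5 → Bool)) ![false, true, true, true, true] :=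
    infected_of_three le_rfl (by decide) (by decide) (by decide) (by decide) (by decide) (by decide) I11100 I11010 I10110
  have I11111 : Infected 5 3 ({![false, false, false, false, false], ![true, false, false, false, false], ![false, true, true, false, false], ![false, true, false, true, false], ![true, false, true, true, false], ![true, true, false, false, true], ![false, false, true, false, true], ![false, false, false, true, true]} : Finset (Fin 5 → Bool)) ![true, true, true, true, true] :=
    infected_of_three le_rfl (by decide) (by decide) (by decide) (by decide) (by decide) (by decide) I11110 I11101 I11011
  intro v
  have hv : v = ![v 0, v 1, v 2, v 3, v 4] := by funext i; fin_cases i <;> rfl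
  rw [hv]
  cases h0 : v 0 <;> cases h1 : v 1 <;> cases h2 : v 2 <;> cases h3 : v 3 <;> cases h4 : v 4
  · exact I00000
  · exact I10000
  · exact I01000
  · exact I11000
  · exact I00100
  · exact I10100
  · exact I01100
  · exact I11100
  · exact I00010
  · exact I10010
  · exact I01010
  · exact I11010
  · exact I00110
  · exact I10110
  · exact I01110
  · exact I11110
  · exact I00001
  · exact I10001
  · exact I01001
  · exact I11001
  · exact I00101
  · exact I10101
  · exact I01101
  · exact I11101
  · exact I00011
  · exact I10011
  · exact I01011
  · exact I11011
  · exact I00111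
  · exact I10111
  · exact I01111
  · exact I11111

end BootUp

namespace BootUp

lemma base3 : ∃ A : Finset (Fin 3 → Bool), A.card ≤ 4 ∧ Percolates 3 3 A := by
  have h0 : Percolates 0 3 (Finset.univ : Finset (Fin 0 → Bool)) := ⟨0, rfl⟩
  obtain ⟨B, hB, hBp⟩ := step (show (0:ℕ) ≠ 1 by decide) h0
  refine ⟨B, ?_, hBp⟩
  have hc : (Finset.univ : Finset (Fin 0 → Bool)).card = 1 := by decide
  omega

lemma exists_small : ∀ d : ℕ, 3 ≤ d →
    ∃ A : Finset (Fin d → Bool), A.card ≤ (d*(d+3)+5)/6 + 1 ∧ Percolates d 3 A := by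
  intro d
  induction d using Nat.strong_induction_on with
  | _ d ih =>
    intro hd
    rcases lt_or_ge d 6 with h6|h6
    · interval_cases d
      · obtain ⟨A, hA, hp⟩ := base3
        exact ⟨A, hA.trans (by norm_num), hp⟩
      · obtain ⟨A, hA, hp⟩ := base4
        exact ⟨A, hA.trans (by norm_num), hp⟩
      · obtain ⟨A, hA, hp⟩ := base5
        exact ⟨A, hA.trans (by norm_num), hp⟩
    · obtain ⟨e, rfl⟩ : ∃ e, d = e + 3 := ⟨d - 3, by omega⟩
      obtain ⟨A, hA, hp⟩ := ih e (by omega) (by omega)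
      obtain ⟨B, hB, hBp⟩ := step (show e ≠ 1 by omega) hp
      refine ⟨B, ?_, hBp⟩
      have harith : (e*(e+3)+5)/6 + 1 + (e+3) = ((e+3)*((e+3)+3)+5)/6 + 1 := by
        have h : (e+3)*((e+3)+3) = e*(e+3) + 6*(e+3) := by ring
        rw [h]
        generalize e*(e+3) = q
        omega
      calc B.card ≤ A.card + (e+3) := hB
        _ ≤ ((e*(e+3)+5)/6 + 1) + (e+3) := Nat.add_le_add_right hA _
        _ = ((e+3)*((e+3)+3)+5)/6 + 1 := harith

end BootUp

/-- For all `d ≥ 3`, `m(Q_d; 3) ≤ ⌈d(d+3)/6⌉ + 1`. -/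
theorem stmt11 (d : ℕ) (hd : 3 ≤ d) : mQ d 3 ≤ (d * (d + 3) + 5) / 6 + 1 := by
  obtain ⟨A, hA, hp⟩ := BootUp.exists_small d hd
  have h1 : mQ d 3 ≤ A.card := Nat.sInf_le ⟨A, rfl, hp⟩
  exact h1.trans hA
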